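/- Any local flow map θ for V on I₀ is continuous on I₀ × I₀ × ℝⁿ; moreover the map (τ, τ₀, x) ↦ V(τ, θ(τ, τ₀, x)), which equals the partial derivative ∂θ/∂τ, is continuous on I₀ × I₀ × ℝⁿ. -/

import Mathlib

/-- A *local flow map* for `V` on `I₀`: for every `(τ₀, x) ∈ I₀ × ℝⁿ`, the curve
`τ ↦ θ τ τ₀ x` is differentiable on `I₀`, satisfies `θ τ₀ τ₀ x = x`, and
`∂θ/∂τ (τ, τ₀, x) = V (τ, θ τ τ₀ x)` for all `τ ∈ I₀`. -/
def IsLocalFlowMap {n : ℕ}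
    (V : ℝ × EuclideanSpace ℝ (Fin n) → EuclideanSpace ℝ (Fin n))
    (I₀ : Set ℝ)
    (θ : ℝ → ℝ → EuclideanSpace ℝ (Fin n) → EuclideanSpace ℝ (Fin n)) : Prop :=
  ∀ τ₀ ∈ I₀, ∀ x : EuclideanSpace ℝ (Fin n),
    θ τ₀ τ₀ x = x ∧
    ∀ τ ∈ I₀, HasDerivAt (fun s => θ s τ₀ x) (V (τ, θ τ τ₀ x)) τ

/-- **Continuity of the local flow map.**
Let `V : ℝ × ℝⁿ → ℝⁿ` be continuous and bounded, uniformly Lipschitz in the second variable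
with constant `C > 0`, and let `I₀ = Ioo a b` be an open interval of length less than `1/C`.
Then any local flow map `θ` for `V` on `I₀` is continuous on `I₀ × I₀ × ℝⁿ`, and the map
`(τ, τ₀, x) ↦ V (τ, θ τ τ₀ x)` (which equals `∂θ/∂τ`) is continuous on `I₀ × I₀ × ℝⁿ`. -/
theorem stmt_2 {n : ℕ} (hn : 1 ≤ n)
    (V : ℝ × EuclideanSpace ℝ (Fin n) → EuclideanSpace ℝ (Fin n))
    (C : ℝ) (hC : 0 < C)
    (hVcont : Continuous V)
    (hVbdd : ∃ M : ℝ, ∀ p, ‖V p‖ ≤ M)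
    (hVlip : ∀ (τ : ℝ) (y₁ y₂ : EuclideanSpace ℝ (Fin n)),
      ‖V (τ, y₁) - V (τ, y₂)‖ ≤ C * ‖y₁ - y₂‖)
    (a b : ℝ) (hab : a < b) (hlen : b - a < 1 / C)
    (θ : ℝ → ℝ → EuclideanSpace ℝ (Fin n) → EuclideanSpace ℝ (Fin n))
    (hθ : IsLocalFlowMap V (Set.Ioo a b) θ) :
    ContinuousOn (fun p : ℝ × ℝ × EuclideanSpace ℝ (Fin n) => θ p.1 p.2.1 p.2.2)
      (Set.Ioo a b ×ˢ Set.Ioo a b ×ˢ (Set.univ : Set (EuclideanSpace ℝ (Fin n)))) ∧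
    ContinuousOn (fun p : ℝ × ℝ × EuclideanSpace ℝ (Fin n) => V (p.1, θ p.1 p.2.1 p.2.2))
      (Set.Ioo a b ×ˢ Set.Ioo a b ×ˢ (Set.univ : Set (EuclideanSpace ℝ (Fin n)))) := by
  obtain ⟨M, hM⟩ := hVbdd
  have hM0 : 0 ≤ M := le_trans (norm_nonneg _) (hM (0, 0))
  set I := Set.Ioo a b with hIdef
  have hconv : Convex ℝ I := convex_Ioo a b
  have hCb : C * (b - a) < 1 := by
    have h := mul_lt_mul_of_pos_left hlen hC
    rwa [mul_one_div, div_self hC.ne'] at h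
  have hden : 0 < 1 - C * (b - a) := by linarith
  set K := (1 - C * (b - a))⁻¹ with hKdef
  have hK0 : 0 < K := inv_pos.mpr hden
  have hK1 : 1 ≤ K := by
    rw [hKdef, le_inv_comm₀ one_pos hden]
    have : 0 ≤ C * (b - a) := mul_nonneg hC.le (by linarith)
    linarith
  have hinit : ∀ τ₀ ∈ I, ∀ x, θ τ₀ τ₀ x = x := fun τ₀ h x => (hθ τ₀ h x).1
  have hderiv : ∀ τ₀ ∈ I, ∀ x, ∀ τ ∈ I,
      HasDerivAt (fun s => θ s τ₀ x) (V (τ, θ τ τ₀ x)) τ :=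
    fun τ₀ h x τ hτ => (hθ τ₀ h x).2 τ hτ
  -- speed bound in τ
  have lemA : ∀ τ₀ ∈ I, ∀ x, ∀ τ ∈ I, ∀ σ ∈ I,
      ‖θ τ τ₀ x - θ σ τ₀ x‖ ≤ M * ‖τ - σ‖ := by
    intro τ₀ h0 x τ hτ σ hσ
    exact hconv.norm_image_sub_le_of_norm_hasDerivWithin_le
      (fun s hs => ((hderiv τ₀ h0 x s hs).hasDerivWithinAt))
      (fun s _ => hM _) hσ hτ
  have hcurve : ∀ τ₀ ∈ I, ∀ x, ContinuousOn (fun s => θ s τ₀ x) I :=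
    fun τ₀ h0 x s hs => (hderiv τ₀ h0 x s hs).continuousAt.continuousWithinAt
  -- contraction estimate in (τ₀, x)
  have lemB : ∀ τ₀ ∈ I, ∀ τ₀' ∈ I, ∀ x x', ∀ τ ∈ I,
      ‖θ τ τ₀ x - θ τ τ₀' x'‖ ≤ K * ‖θ τ₀ τ₀ x - θ τ₀ τ₀' x'‖ := by
    intro τ₀ h0 τ₀' h0' x x' τ hτ
    set g : ℝ → ℝ := fun s => ‖θ s τ₀ x - θ s τ₀' x'‖ with hgdef
    set J := Set.uIcc τ₀ τ with hJdef
    have hJI : J ⊆ I := Set.ordConnected_Ioo.uIcc_subset h0 hτ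
    have hgc : ContinuousOn g J :=
      (((hcurve τ₀ h0 x).mono hJI).sub ((hcurve τ₀' h0' x').mono hJI)).norm
    obtain ⟨s₁, hs₁J, hmax⟩ :=
      isCompact_uIcc.exists_isMaxOn ⟨τ₀, Set.left_mem_uIcc⟩ hgc
    have hconvJ : Convex ℝ J := by
      rw [hJdef, Set.uIcc]; exact convex_Icc _ _
    have hmvt : ‖(θ s₁ τ₀ x - θ s₁ τ₀' x') - (θ τ₀ τ₀ x - θ τ₀ τ₀' x')‖ ≤
        (C * g s₁) * ‖s₁ - τ₀‖ := by
      refine hconvJ.norm_image_sub_le_of_norm_hasDerivWithin_le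
        (f := fun s => θ s τ₀ x - θ s τ₀' x')
        (f' := fun s => V (s, θ s τ₀ x) - V (s, θ s τ₀' x'))
        (fun s hs => (((hderiv τ₀ h0 x s (hJI hs)).sub
          (hderiv τ₀' h0' x' s (hJI hs))).hasDerivWithinAt)) ?_
        Set.left_mem_uIcc hs₁J
      intro s hs
      exact le_trans (hVlip s _ _) (mul_le_mul_of_nonneg_left (hmax hs) hC.le)
    have hdist : ‖s₁ - τ₀‖ ≤ b - a := by
      rw [Real.norm_eq_abs, abs_sub_le_iff]
      have h1 := hJI hs₁J
      constructor <;> [linarith [h1.1, h1.2, h0.1, h0.2]; linarith [h1.1, h1.2, h0.1, h0.2]]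
    have hg0 : 0 ≤ g s₁ := norm_nonneg _
    have hstep : g s₁ ≤ g τ₀ + C * (b - a) * g s₁ := by
      have h1 : g s₁ ≤ ‖(θ s₁ τ₀ x - θ s₁ τ₀' x') - (θ τ₀ τ₀ x - θ τ₀ τ₀' x')‖ + g τ₀ := by
        have := norm_add_le ((θ s₁ τ₀ x - θ s₁ τ₀' x') - (θ τ₀ τ₀ x - θ τ₀ τ₀' x'))
          (θ τ₀ τ₀ x - θ τ₀ τ₀' x')
        simpa [sub_add_cancel] using this
      have h2 : (C * g s₁) * ‖s₁ - τ₀‖ ≤ C * (b - a) * g s₁ := by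
        have := mul_le_mul_of_nonneg_left hdist (mul_nonneg hC.le hg0)
        nlinarith
      linarith [hmvt]
    have hs1bound : g s₁ ≤ K * g τ₀ := by
      have h1 : (1 - C * (b - a)) * g s₁ ≤ g τ₀ := by nlinarith
      calc g s₁ = K * ((1 - C * (b - a)) * g s₁) := by
            rw [← mul_assoc, hKdef, inv_mul_cancel₀ hden.ne', one_mul]
        _ ≤ K * g τ₀ := mul_le_mul_of_nonneg_left h1 hK0.le
    exact le_trans (hmax Set.right_mem_uIcc) hs1bound
  -- joint Lipschitz estimate
  have lipsch : ∀ τ ∈ I, ∀ τ₀ ∈ I, ∀ x : EuclideanSpace ℝ (Fin n),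
      ∀ τ' ∈ I, ∀ τ₀' ∈ I, ∀ x' : EuclideanSpace ℝ (Fin n),
      ‖θ τ τ₀ x - θ τ' τ₀' x'‖ ≤ M * ‖τ - τ'‖ + K * (‖x - x'‖ + M * ‖τ₀' - τ₀‖) := by
    intro τ hτ τ₀ h0 x τ' hτ' τ₀' h0' x'
    have tri : ‖θ τ τ₀ x - θ τ' τ₀' x'‖ ≤
        ‖θ τ τ₀ x - θ τ' τ₀ x‖ + ‖θ τ' τ₀ x - θ τ' τ₀' x'‖ := norm_sub_le_norm_sub_add_norm_sub _ _ _
    have h1 : ‖θ τ τ₀ x - θ τ' τ₀ x‖ ≤ M * ‖τ - τ'‖ := lemA τ₀ h0 x τ hτ τ' hτ'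
    have h2 : ‖θ τ' τ₀ x - θ τ' τ₀' x'‖ ≤ K * ‖θ τ₀ τ₀ x - θ τ₀ τ₀' x'‖ :=
      lemB τ₀ h0 τ₀' h0' x x' τ' hτ'
    have h3 : ‖θ τ₀ τ₀ x - θ τ₀ τ₀' x'‖ ≤ ‖x - x'‖ + M * ‖τ₀' - τ₀‖ := by
      rw [hinit τ₀ h0 x]
      calc ‖x - θ τ₀ τ₀' x'‖ ≤ ‖x - x'‖ + ‖x' - θ τ₀ τ₀' x'‖ :=
            norm_sub_le_norm_sub_add_norm_sub _ _ _
        _ ≤ ‖x - x'‖ + M * ‖τ₀' - τ₀‖ := by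
            have : ‖θ τ₀' τ₀' x' - θ τ₀ τ₀' x'‖ ≤ M * ‖τ₀' - τ₀‖ :=
              lemA τ₀' h0' x' τ₀' h0' τ₀ h0
            rw [hinit τ₀' h0' x'] at this
            linarith
    have h4 : K * ‖θ τ₀ τ₀ x - θ τ₀ τ₀' x'‖ ≤ K * (‖x - x'‖ + M * ‖τ₀' - τ₀‖) :=
      mul_le_mul_of_nonneg_left h3 hK0.le
    linarith
  -- continuity of θ
  have hcont1 : ContinuousOn (fun p : ℝ × ℝ × EuclideanSpace ℝ (Fin n) => θ p.1 p.2.1 p.2.2)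
      (I ×ˢ I ×ˢ (Set.univ : Set (EuclideanSpace ℝ (Fin n)))) := by
    set L : ℝ := M + K * (1 + M) with hLdef
    have hL0 : 0 ≤ L := by positivity
    refine LipschitzOnWith.continuousOn (K := ⟨L, hL0⟩) ?_
    refine lipschitzOnWith_iff_dist_le_mul.2 ?_
    rintro ⟨τ, τ₀, x⟩ hp ⟨τ', τ₀', x'⟩ hq
    simp only [Set.mem_prod, Set.mem_univ, and_true] at hp hq
    have hd : dist (τ, τ₀, x) (τ', τ₀', x') =
        max (dist τ τ') (max (dist τ₀ τ₀') (dist x x')) := by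
      rw [Prod.dist_eq, Prod.dist_eq]
    set d := dist ((τ, τ₀, x) : ℝ × ℝ × EuclideanSpace ℝ (Fin n)) (τ', τ₀', x') with hddef
    have hd0 : 0 ≤ d := dist_nonneg
    have e1 : ‖τ - τ'‖ ≤ d := by
      rw [hd, ← dist_eq_norm]; exact le_max_left _ _
    have e2 : ‖τ₀' - τ₀‖ ≤ d := by
      rw [hd, norm_sub_rev, ← dist_eq_norm]
      exact le_trans (le_max_left _ _) (le_max_right _ _)
    have e3 : ‖x - x'‖ ≤ d := by
      rw [hd, ← dist_eq_norm]
      exact le_trans (le_max_right _ _) (le_max_right _ _)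
    have key := lipsch τ hp.1 τ₀ hp.2 x τ' hq.1 τ₀' hq.2 x'
    rw [dist_eq_norm]
    push_cast
    calc ‖θ τ τ₀ x - θ τ' τ₀' x'‖ ≤ M * ‖τ - τ'‖ + K * (‖x - x'‖ + M * ‖τ₀' - τ₀‖) := key
      _ ≤ M * d + K * (d + M * d) := by
          have := mul_le_mul_of_nonneg_left e1 hM0
          have h2 := mul_le_mul_of_nonneg_left e2 hM0
          have h3 : ‖x - x'‖ + M * ‖τ₀' - τ₀‖ ≤ d + M * d := by linarith
          have := mul_le_mul_of_nonneg_left h3 hK0.le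
          linarith
      _ = L * d := by ring
  refine ⟨hcont1, ?_⟩
  have : ContinuousOn (fun p : ℝ × ℝ × EuclideanSpace ℝ (Fin n) => (p.1, θ p.1 p.2.1 p.2.2))
      (I ×ˢ I ×ˢ (Set.univ : Set (EuclideanSpace ℝ (Fin n)))) :=
    (continuous_fst.continuousOn).prodMk hcont1
  exact hVcont.comp_continuousOn this
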